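/- The algebra homomorphism F[w₂,…,wₙ] → R defined by w_k ↦ (z₁−z_avg)^k + ⋯ + (zₙ−z_avg)^k for 2 ≤ k ≤ n (where z_avg = (z₁+⋯+zₙ)/n) is an algebra isomorphism onto R. -/

import Mathlib

open MvPolynomial

/-- A polynomial is translation invariant if substituting `zᵢ ↦ zᵢ + c` fixes it for all `c`. -/
def TransInv {F : Type*} [CommSemiring F] {n : ℕ} (p : MvPolynomial (Fin n) F) : Prop :=
  ∀ c : F, aeval (fun i : Fin n => X i + C c) p = p

set_option linter.unusedSectionVars false
set_option linter.deprecated false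


open MvPolynomial

/-- A surjective ring endomorphism of a Noetherian commutative ring is injective. -/
theorem ringHom_injective_of_surjective {R : Type*} [CommRing R] [IsNoetherianRing R]
    (θ : R →+* R) (hs : Function.Surjective θ) : Function.Injective θ := by
  let g : ℕ → (R →+* R) := fun k => Nat.rec (RingHom.id R) (fun _ f => θ.comp f) k
  have hgsucc : ∀ k, g (k + 1) = θ.comp (g k) := fun k => rfl
  have hgsurj : ∀ k, Function.Surjective (g k) := by
    intro k; induction k with
    | zero => exact Function.surjective_id
    | succ k ih => exact hs.comp ih
  have hmono : Monotone fun k => RingHom.ker (g k) := by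
    apply monotone_nat_of_le_succ
    intro k x hx
    have hx' : g k x = 0 := RingHom.mem_ker.mp hx
    rw [RingHom.mem_ker, hgsucc, RingHom.coe_comp, Function.comp_apply, hx', map_zero]
  obtain ⟨N, hN⟩ := monotone_stabilizes_iff_noetherian.mpr ‹IsNoetherianRing R›
    ⟨fun k => RingHom.ker (g k), hmono⟩
  rw [injective_iff_map_eq_zero]
  intro a ha
  obtain ⟨b, rfl⟩ := hgsurj N a
  have hb : b ∈ RingHom.ker (g (N + 1)) := by
    rw [RingHom.mem_ker, hgsucc, RingHom.coe_comp, Function.comp_apply, ha]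
  have heq : RingHom.ker (g N) = RingHom.ker (g (N + 1)) := hN (N + 1) (Nat.le_succ N)
  exact RingHom.mem_ker.mp (heq ▸ hb)

theorem key_transfer {N : ℕ} {F S : Type*} [Field F] [CommRing S] [Algebra F S]
    (f g : MvPolynomial (Fin N) F →ₐ[F] S)
    (θ : MvPolynomial (Fin N) F →ₐ[F] MvPolynomial (Fin N) F)
    (hcomp : g = f.comp θ) (hf : Function.Injective f)
    (hrange : f.range ≤ g.range) :
    Function.Injective g ∧ g.range = f.range := by
  have hθsurj : Function.Surjective θ := by
    rw [← AlgHom.range_eq_top]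
    rw [← top_le_iff, ← MvPolynomial.adjoin_range_X, Algebra.adjoin_le_iff]
    rintro x ⟨i, rfl⟩
    obtain ⟨h, hh⟩ := hrange (f.mem_range_self (X i))
    have hh' : f (θ h) = f (X i) := by
      rw [hcomp] at hh; exact hh
    exact ⟨h, hf hh'⟩
  have hθinj : Function.Injective θ := ringHom_injective_of_surjective θ.toRingHom hθsurj
  constructor
  · rw [hcomp]; exact (hf.comp hθinj :)
  · refine le_antisymm ?_ hrange
    rintro x ⟨p, rfl⟩
    rw [hcomp]; exact f.mem_range_self _

lemma sum_anti_reindex {M : Type*} [AddCommMonoid M] (k : ℕ) (G : ℕ → ℕ → M) :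
    ∑ a ∈ Finset.HasAntidiagonal.antidiagonal k with a.1 ∈ Set.Ioo 0 k, G a.1 a.2
      = ∑ j ∈ Finset.Ioo 0 k, G (k - j) j := by
  refine Finset.sum_nbij' (fun a => a.2) (fun j => (k - j, j)) ?_ ?_ ?_ ?_ ?_
  · rintro ⟨a1, a2⟩ ha
    simp only [Finset.mem_filter, Finset.HasAntidiagonal.mem_antidiagonal, Set.mem_Ioo] at ha
    simp only [Finset.mem_Ioo]
    omega
  · intro j hj
    simp only [Finset.mem_Ioo] at hj
    simp only [Finset.mem_filter, Finset.HasAntidiagonal.mem_antidiagonal, Set.mem_Ioo]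
    omega
  · rintro ⟨a1, a2⟩ ha
    simp only [Finset.mem_filter, Finset.HasAntidiagonal.mem_antidiagonal, Set.mem_Ioo] at ha
    have h1 : k - a2 = a1 := by omega
    simp [h1]
  · intro j hj; rfl
  · rintro ⟨a1, a2⟩ ha
    simp only [Finset.mem_filter, Finset.HasAntidiagonal.mem_antidiagonal, Set.mem_Ioo] at ha
    simp only []
    congr 1
    omega

lemma sum_anti_reindex' {M : Type*} [AddCommMonoid M] (k : ℕ) (G : ℕ → ℕ → M) :
    ∑ a ∈ Finset.HasAntidiagonal.antidiagonal k with a.1 < k, G a.1 a.2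
      = ∑ j ∈ Finset.Ioc 0 k, G (k - j) j := by
  refine Finset.sum_nbij' (fun a => a.2) (fun j => (k - j, j)) ?_ ?_ ?_ ?_ ?_
  · rintro ⟨a1, a2⟩ ha
    simp only [Finset.mem_filter, Finset.HasAntidiagonal.mem_antidiagonal] at ha
    simp only [Finset.mem_Ioc]; omega
  · intro j hj
    simp only [Finset.mem_Ioc] at hj
    simp only [Finset.mem_filter, Finset.HasAntidiagonal.mem_antidiagonal]; omega
  · rintro ⟨a1, a2⟩ ha
    simp only [Finset.mem_filter, Finset.HasAntidiagonal.mem_antidiagonal] at ha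
    have h1 : k - a2 = a1 := by omega
    simp [h1]
  · intro j hj; rfl
  · rintro ⟨a1, a2⟩ ha
    simp only [Finset.mem_filter, Finset.HasAntidiagonal.mem_antidiagonal] at ha
    simp only []; congr 1; omega
noncomputable section

open MvPolynomial Finset

variable (n : ℕ) (F : Type*) [Field F] [CharZero F]

/-- the `k-1`-st variable, or junk. -/
def Xv (k : ℕ) : MvPolynomial (Fin n) F :=
  if h : k - 1 < n then X ⟨k - 1, h⟩ else 0

def Epol : MvPolynomial (Fin n) F →ₐ[F] MvPolynomial (Fin n) F :=
  aeval (fun i : Fin n => esymm (Fin n) F ((i : ℕ) + 1))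

def Ppol : MvPolynomial (Fin n) F →ₐ[F] MvPolynomial (Fin n) F :=
  aeval (fun i : Fin n => psum (Fin n) F ((i : ℕ) + 1))

lemma Epol_Xv {k : ℕ} (h0 : 0 < k) (hk : k ≤ n) :
    Epol n F (Xv n F k) = esymm (Fin n) F k := by
  have h : k - 1 < n := by omega
  rw [Xv, dif_pos h, Epol, aeval_X]
  have hc : ((⟨k - 1, h⟩ : Fin n) : ℕ) = k - 1 := rfl
  rw [hc]
  congr 1
  omega

lemma Ppol_Xv {k : ℕ} (h0 : 0 < k) (hk : k ≤ n) :
    Ppol n F (Xv n F k) = psum (Fin n) F k := by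
  have h : k - 1 < n := by omega
  rw [Xv, dif_pos h, Ppol, aeval_X]
  have hc : ((⟨k - 1, h⟩ : Fin n) : ℕ) = k - 1 := rfl
  rw [hc]
  congr 1
  omega

lemma Epol_injective : Function.Injective (Epol n F) := by
  have h := esymmAlgHom_fin_injective (n := n) (m := n) F le_rfl
  intro a b hab
  apply h
  apply Subtype.ext
  rwa [esymmAlgHom_apply, esymmAlgHom_apply]

lemma Epol_eq (p : MvPolynomial (Fin n) F) :
    Epol n F p = (esymmAlgHom (Fin n) F n p).val :=
  (esymmAlgHom_apply p).symm

lemma Epol_range : (Epol n F).range = symmetricSubalgebra (Fin n) F := by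
  apply le_antisymm
  · rintro x ⟨p, rfl⟩
    show Epol n F p ∈ _
    rw [Epol_eq]
    exact (esymmAlgHom (Fin n) F n p).2
  · rintro p hp
    obtain ⟨q, hq⟩ := esymmAlgHom_fin_surjective (n := n) (m := n) F le_rfl ⟨p, hp⟩
    exact ⟨q, show Epol n F q = p by rw [Epol_eq, hq]⟩

lemma psum_mem_Ppol_range {k : ℕ} (hk : k ≤ n) :
    psum (Fin n) F k ∈ (Ppol n F).range := by
  rcases Nat.eq_zero_or_pos k with rfl | h0
  · rw [psum_zero]
    exact Subalgebra.natCast_mem _ _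
  · exact ⟨Xv n F k, Ppol_Xv n F h0 hk⟩

lemma esymm_mem_Ppol_range {k : ℕ} (hk : k ≤ n) :
    esymm (Fin n) F k ∈ (Ppol n F).range := by
  induction k using Nat.strong_induction_on with
  | _ k ih =>
    rcases Nat.eq_zero_or_pos k with rfl | h0
    · rw [esymm_zero]; exact Subalgebra.one_mem _
    have hnewton := mul_esymm_eq_sum (Fin n) F k
    have hksum : ∑ a ∈ Finset.HasAntidiagonal.antidiagonal k with a.1 < k,
        (-1) ^ a.1 * esymm (Fin n) F a.1 * psum (Fin n) F a.2 ∈ (Ppol n F).range := by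
      rw [sum_anti_reindex' k (fun b c => (-1) ^ b * esymm (Fin n) F b * psum (Fin n) F c)]
      apply Subalgebra.sum_mem
      intro j hj
      rw [Finset.mem_Ioc] at hj
      apply Subalgebra.mul_mem
      · apply Subalgebra.mul_mem
        · apply Subalgebra.pow_mem
          apply Subalgebra.neg_mem
          exact Subalgebra.one_mem _
        · exact ih (k - j) (by omega) (by omega)
      · exact psum_mem_Ppol_range n F (by omega)
    have hCk : (k : MvPolynomial (Fin n) F) ≠ 0 := by
      exact_mod_cast Nat.cast_ne_zero.mpr (by omega)
    have hCk' : (C ((k : F)⁻¹) : MvPolynomial (Fin n) F) * (k : MvPolynomial (Fin n) F)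
        = 1 := by
      rw [← map_natCast (C : F →+* MvPolynomial (Fin n) F) k, ← map_mul,
        inv_mul_cancel₀ (by exact_mod_cast Nat.cast_ne_zero.mpr (by omega)), map_one]
    have : esymm (Fin n) F k
        = C ((k : F)⁻¹) * ((k : MvPolynomial (Fin n) F) * esymm (Fin n) F k) := by
      rw [← mul_assoc, hCk', one_mul]
    rw [this, hnewton]
    apply Subalgebra.mul_mem
    · exact Subalgebra.algebraMap_mem _ _
    · apply Subalgebra.mul_mem
      · apply Subalgebra.pow_mem; apply Subalgebra.neg_mem; exact Subalgebra.one_mem _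
      · exact hksum

lemma Ppol_range_le : (Ppol n F).range ≤ symmetricSubalgebra (Fin n) F := by
  rw [Ppol, ← Algebra.adjoin_range_eq_range_aeval, Algebra.adjoin_le_iff]
  rintro x ⟨i, rfl⟩
  exact (mem_symmetricSubalgebra _).mpr (psum_isSymmetric _ _ _)

def pvec : ℕ → MvPolynomial (Fin n) F
  | k => C ((-1 : F) ^ (k + 1) * k) * Xv n F k -
      ∑ j ∈ (Finset.Ioo 0 k).attach,
        C ((-1 : F) ^ (k - j.1)) * Xv n F (k - j.1) * pvec j.1
  decreasing_by exact (Finset.mem_Ioo.mp j.2).2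

lemma Epol_pvec : ∀ k, 0 < k → k ≤ n → Epol n F (pvec n F k) = psum (Fin n) F k := by
  intro k
  induction k using Nat.strong_induction_on with
  | _ k ih =>
    intro h0 hk
    have hrhs := psum_eq_mul_esymm_sub_sum (Fin n) F k h0
    rw [sum_anti_reindex k
      (fun b c => (-1) ^ b * esymm (Fin n) F b * psum (Fin n) F c)] at hrhs
    rw [pvec, map_sub, map_mul, map_sum, Epol_Xv n F h0 hk]
    have hsum : ∑ j ∈ (Finset.Ioo 0 k).attach,
        Epol n F (C ((-1 : F) ^ (k - j.1)) * Xv n F (k - j.1) * pvec n F j.1)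
        = ∑ j ∈ Finset.Ioo 0 k,
          (-1) ^ (k - j) * esymm (Fin n) F (k - j) * psum (Fin n) F j := by
      rw [Finset.sum_attach (Finset.Ioo 0 k)
        (fun j => Epol n F (C ((-1 : F) ^ (k - j)) * Xv n F (k - j) * pvec n F j))]
      apply Finset.sum_congr rfl
      intro j hj
      rw [Finset.mem_Ioo] at hj
      rw [map_mul, map_mul, Epol_Xv n F (by omega) (by omega), ih j hj.2 hj.1 (by omega),
        show (Epol n F) (C ((-1 : F) ^ (k - j))) = C ((-1 : F) ^ (k - j)) from aeval_C _ _,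
        map_pow, map_neg, map_one]
    rw [hsum, hrhs]
    congr 1
    rw [show (Epol n F) (C ((-1 : F) ^ (k + 1) * ↑k)) = C ((-1 : F) ^ (k + 1) * ↑k)
      from aeval_C _ _, map_mul, map_pow, map_neg, map_one, map_natCast, mul_assoc]

def theta : MvPolynomial (Fin n) F →ₐ[F] MvPolynomial (Fin n) F :=
  aeval (fun i : Fin n => pvec n F ((i : ℕ) + 1))

lemma Ppol_eq_comp : Ppol n F = (Epol n F).comp (theta n F) := by
  apply MvPolynomial.algHom_ext
  intro i
  rw [AlgHom.comp_apply, theta, aeval_X, Ppol, aeval_X,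
    Epol_pvec n F _ (Nat.succ_pos _) i.isLt]

lemma Epol_range_le_Ppol : (Epol n F).range ≤ (Ppol n F).range := by
  rw [Epol, ← Algebra.adjoin_range_eq_range_aeval, Algebra.adjoin_le_iff]
  rintro x ⟨i, rfl⟩
  exact esymm_mem_Ppol_range n F i.isLt

lemma Ppol_inj_range :
    Function.Injective (Ppol n F) ∧ (Ppol n F).range = symmetricSubalgebra (Fin n) F := by
  obtain ⟨h1, h2⟩ := key_transfer (Epol n F) (Ppol n F) (theta n F) (Ppol_eq_comp n F)
    (Epol_injective n F) (Epol_range_le_Ppol n F)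
  exact ⟨h1, h2.trans (Epol_range n F)⟩


end
noncomputable section

open MvPolynomial Finset

variable (m : ℕ) (F : Type*) [Field F] [CharZero F]

/-- the centered variables -/
def yv (i : Fin (m + 1)) : MvPolynomial (Fin (m + 1)) F :=
  X i - C (((m + 1 : ℕ) : F)⁻¹) * ∑ j : Fin (m + 1), X j

/-- centered power sums -/
def qp (k : ℕ) : MvPolynomial (Fin (m + 1)) F := ∑ i : Fin (m + 1), yv m F i ^ k

/-- the average -/
def av : MvPolynomial (Fin (m + 1)) F := C (((m + 1 : ℕ) : F)⁻¹) * psum (Fin (m + 1)) F 1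

lemma natF_ne_zero : ((m + 1 : ℕ) : F) ≠ 0 := Nat.cast_ne_zero.mpr (Nat.succ_ne_zero m)

lemma yv_eq (i : Fin (m + 1)) : yv m F i = X i - av m F := by
  rw [yv, av, psum_one]

lemma sum_yv : ∑ i : Fin (m + 1), yv m F i = 0 := by
  have hcard : (Finset.univ : Finset (Fin (m + 1))).card = m + 1 := Finset.card_univ.trans
    (Fintype.card_fin _)
  simp only [yv_eq]
  rw [Finset.sum_sub_distrib, Finset.sum_const, hcard, ← psum_one (Fin (m+1)) F, av,
    nsmul_eq_mul, ← mul_assoc, show ((m + 1 : ℕ) : MvPolynomial (Fin (m+1)) F)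
      = C ((m + 1 : ℕ) : F) from (map_natCast _ _).symm,
    ← map_mul, mul_inv_cancel₀ (natF_ne_zero m F), map_one, one_mul, sub_self]

lemma qp_zero : qp m F 0 = ((m + 1 : ℕ) : MvPolynomial (Fin (m + 1)) F) := by
  simp [qp]

lemma qp_one : qp m F 1 = 0 := by
  simp only [qp, pow_one]
  exact sum_yv m F

lemma sum_add_pow (w : Fin (m + 1) → MvPolynomial (Fin (m + 1)) F)
    (b : MvPolynomial (Fin (m + 1)) F) (k : ℕ) :
    ∑ i : Fin (m + 1), (w i + b) ^ k
      = ∑ j ∈ Finset.range (k + 1), (∑ i : Fin (m + 1), w i ^ j) * b ^ (k - j)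
          * (k.choose j : MvPolynomial (Fin (m + 1)) F) := by
  have h1 : ∀ i : Fin (m + 1), (w i + b) ^ k
      = ∑ j ∈ Finset.range (k + 1), w i ^ j * b ^ (k - j) * (k.choose j) :=
    fun i => add_pow (w i) b k
  rw [Finset.sum_congr rfl (fun i _ => h1 i), Finset.sum_comm]
  apply Finset.sum_congr rfl
  intro j _
  rw [Finset.sum_mul, Finset.sum_mul]

lemma q_in_p (k : ℕ) :
    qp m F k = ∑ j ∈ Finset.range (k + 1), psum (Fin (m + 1)) F j * (-(av m F)) ^ (k - j)
      * (k.choose j : MvPolynomial (Fin (m + 1)) F) := by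
  have : ∀ i : Fin (m + 1), yv m F i = X i + -(av m F) := by
    intro i; rw [yv_eq, sub_eq_add_neg]
  rw [qp]
  simp only [this]
  rw [sum_add_pow]
  apply Finset.sum_congr rfl
  intro j _
  rw [psum]

lemma p_in_q (k : ℕ) :
    psum (Fin (m + 1)) F k = ∑ j ∈ Finset.range (k + 1), qp m F j * (av m F) ^ (k - j)
      * (k.choose j : MvPolynomial (Fin (m + 1)) F) := by
  have : ∀ i : Fin (m + 1), X i = yv m F i + av m F := by
    intro i; rw [yv_eq, sub_add_cancel]
  rw [psum]
  simp only [this]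
  rw [sum_add_pow]
  apply Finset.sum_congr rfl
  intro j _
  rw [qp]

end
noncomputable section

open MvPolynomial Finset

variable (m : ℕ) (F : Type*) [Field F] [CharZero F]

/-- generators of the extended map: average, then centered power sums 2, …, m+1 -/
def tv (k : Fin (m + 1)) : MvPolynomial (Fin (m + 1)) F :=
  if (k : ℕ) = 0 then av m F else qp m F ((k : ℕ) + 1)

def Tpol : MvPolynomial (Fin (m + 1)) F →ₐ[F] MvPolynomial (Fin (m + 1)) F :=
  aeval (tv m F)

lemma av_mem_Ppol_range : av m F ∈ (Ppol (m + 1) F).range := by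
  rw [av, show (C (((m + 1 : ℕ) : F)⁻¹) : MvPolynomial (Fin (m+1)) F)
    = algebraMap F _ (((m + 1 : ℕ) : F)⁻¹) from rfl]
  exact Subalgebra.mul_mem _ (Subalgebra.algebraMap_mem _ _)
    (psum_mem_Ppol_range (m + 1) F (Nat.one_le_iff_ne_zero.mpr (Nat.succ_ne_zero m)))

lemma qp_mem_Ppol_range {k : ℕ} (hk : k ≤ m + 1) :
    qp m F k ∈ (Ppol (m + 1) F).range := by
  rw [q_in_p]
  apply Subalgebra.sum_mem
  intro j hj
  rw [Finset.mem_range] at hj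
  refine Subalgebra.mul_mem _ (Subalgebra.mul_mem _ ?_ ?_) (Subalgebra.natCast_mem _ _)
  · exact psum_mem_Ppol_range (m + 1) F (by omega)
  · exact Subalgebra.pow_mem _ (Subalgebra.neg_mem _ (av_mem_Ppol_range m F)) _

lemma tv_mem_Ppol_range (k : Fin (m + 1)) : tv m F k ∈ (Ppol (m + 1) F).range := by
  rw [tv]
  split_ifs with h
  · exact av_mem_Ppol_range m F
  · exact qp_mem_Ppol_range m F (by omega)

lemma av_mem_Tpol_range : av m F ∈ (Tpol m F).range := by
  refine ⟨X 0, ?_⟩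
  show Tpol m F (X 0) = av m F
  rw [Tpol, aeval_X, tv]
  simp

lemma qp_mem_Tpol_range {k : ℕ} (hk : k ≤ m + 1) :
    qp m F k ∈ (Tpol m F).range := by
  rcases Nat.lt_or_ge k 2 with h2 | h2
  · interval_cases k
    · rw [qp_zero]; exact Subalgebra.natCast_mem _ _
    · rw [qp_one]; exact Subalgebra.zero_mem _
  · refine ⟨X ⟨k - 1, by omega⟩, ?_⟩
    show Tpol m F (X ⟨k - 1, by omega⟩) = qp m F k
    rw [Tpol, aeval_X, tv]
    have hval : ((⟨k - 1, by omega⟩ : Fin (m + 1)) : ℕ) = k - 1 := rfl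
    rw [hval, if_neg (by omega)]
    congr 1
    omega

lemma psum_mem_Tpol_range {k : ℕ} (hk : k ≤ m + 1) :
    psum (Fin (m + 1)) F k ∈ (Tpol m F).range := by
  rw [p_in_q]
  apply Subalgebra.sum_mem
  intro j hj
  rw [Finset.mem_range] at hj
  refine Subalgebra.mul_mem _ (Subalgebra.mul_mem _ ?_ ?_) (Subalgebra.natCast_mem _ _)
  · exact qp_mem_Tpol_range m F (by omega)
  · exact Subalgebra.pow_mem _ (av_mem_Tpol_range m F) _

/-- source-level polynomial mapping to `psum j` under `Ppol` -/
def Pv (j : ℕ) : MvPolynomial (Fin (m + 1)) F :=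
  if j = 0 then ((m + 1 : ℕ) : MvPolynomial (Fin (m + 1)) F) else Xv (m + 1) F j

lemma Ppol_Pv {j : ℕ} (hj : j ≤ m + 1) : Ppol (m + 1) F (Pv m F j) = psum (Fin (m + 1)) F j := by
  rw [Pv]
  split_ifs with h
  · subst h; rw [map_natCast, psum_zero]; simp
  · exact Ppol_Xv (m + 1) F (by omega) hj

/-- source-level polynomial mapping to `av` under `Ppol` -/
def avv : MvPolynomial (Fin (m + 1)) F := C (((m + 1 : ℕ) : F)⁻¹) * X 0

lemma Ppol_avv : Ppol (m + 1) F (avv m F) = av m F := by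
  rw [avv, map_mul, av]
  congr 1
  · exact aeval_C _ _
  · rw [Ppol, aeval_X]
    simp

/-- source-level polynomial mapping to `tv k` under `Ppol` -/
def bv (k : Fin (m + 1)) : MvPolynomial (Fin (m + 1)) F :=
  if (k : ℕ) = 0 then avv m F else
    ∑ j ∈ Finset.range ((k : ℕ) + 2), Pv m F j * (-(avv m F)) ^ ((k : ℕ) + 1 - j)
      * ((((k : ℕ) + 1).choose j : MvPolynomial (Fin (m + 1)) F))

lemma Ppol_bv (k : Fin (m + 1)) : Ppol (m + 1) F (bv m F k) = tv m F k := by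
  rw [bv, tv]
  split_ifs with h
  · exact Ppol_avv m F
  · rw [map_sum, q_in_p]
    apply Finset.sum_congr rfl
    intro j hj
    rw [Finset.mem_range] at hj
    rw [map_mul, map_mul, map_pow, map_neg, Ppol_avv, Ppol_Pv m F (by omega), map_natCast]

def beta : MvPolynomial (Fin (m + 1)) F →ₐ[F] MvPolynomial (Fin (m + 1)) F :=
  aeval (bv m F)

lemma Tpol_eq_comp : Tpol m F = (Ppol (m + 1) F).comp (beta m F) := by
  apply MvPolynomial.algHom_ext
  intro i
  rw [AlgHom.comp_apply, beta, aeval_X, Tpol, aeval_X, Ppol_bv]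

lemma Ppol_range_le_Tpol : (Ppol (m + 1) F).range ≤ (Tpol m F).range := by
  rw [Ppol, ← Algebra.adjoin_range_eq_range_aeval, Algebra.adjoin_le_iff]
  rintro x ⟨i, rfl⟩
  exact psum_mem_Tpol_range m F i.isLt

lemma Tpol_range_le_Ppol : (Tpol m F).range ≤ (Ppol (m + 1) F).range := by
  rw [Tpol, ← Algebra.adjoin_range_eq_range_aeval, Algebra.adjoin_le_iff]
  rintro x ⟨i, rfl⟩
  exact tv_mem_Ppol_range m F i

lemma Tpol_inj_range :
    Function.Injective (Tpol m F)
      ∧ (Tpol m F).range = symmetricSubalgebra (Fin (m + 1)) F := by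
  obtain ⟨hPinj, hPrange⟩ := Ppol_inj_range (m + 1) F
  obtain ⟨h1, h2⟩ := key_transfer (Ppol (m + 1) F) (Tpol m F) (beta m F) (Tpol_eq_comp m F)
    hPinj (Ppol_range_le_Tpol m F)
  exact ⟨h1, h2.trans hPrange⟩

end
noncomputable section

open MvPolynomial Finset

variable (m : ℕ) (F : Type*) [Field F] [CharZero F]

def Ymap : MvPolynomial (Fin (m + 1)) F →ₐ[F] MvPolynomial (Fin (m + 1)) F :=
  aeval (yv m F)

lemma Ymap_yv (i : Fin (m + 1)) : Ymap m F (yv m F i) = yv m F i := by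
  rw [yv, map_sub, map_mul, map_sum]
  simp only [Ymap, aeval_X, aeval_C, algebraMap_eq]
  rw [sum_yv, mul_zero, sub_zero, yv]

lemma Ymap_qp (k : ℕ) : Ymap m F (qp m F k) = qp m F k := by
  rw [qp, map_sum]
  apply Finset.sum_congr rfl
  intro i _
  rw [map_pow, Ymap_yv]

lemma Ymap_psum (k : ℕ) : Ymap m F (psum (Fin (m + 1)) F k) = qp m F k := by
  rw [psum, map_sum, qp]
  apply Finset.sum_congr rfl
  intro i _
  rw [map_pow, Ymap, aeval_X]

/-- the generic translation map into `Polynomial` -/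
def Amap : MvPolynomial (Fin (m + 1)) F →ₐ[F] Polynomial (MvPolynomial (Fin (m + 1)) F) :=
  aeval (fun i => Polynomial.C (X i) + Polynomial.X)

lemma eval_Amap (t : MvPolynomial (Fin (m + 1)) F) (p : MvPolynomial (Fin (m + 1)) F) :
    Polynomial.eval t (Amap m F p)
      = aeval (fun i : Fin (m + 1) => X i + t) p := by
  have : (Polynomial.evalRingHom t).comp (Amap m F : MvPolynomial (Fin (m+1)) F →+* _)
      = ((aeval (fun i : Fin (m + 1) => X i + t) :
          MvPolynomial (Fin (m+1)) F →ₐ[F] _) : MvPolynomial (Fin (m+1)) F →+* _) := by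
    apply MvPolynomial.ringHom_ext
    · intro a
      simp [Amap, algebraMap_eq]
    · intro i
      simp [Amap]
  exact RingHom.congr_fun this p

lemma Ymap_of_transInv {p : MvPolynomial (Fin (m + 1)) F} (hp : TransInv p) :
    Ymap m F p = p := by
  have hroot : ∀ c : F, Polynomial.IsRoot (Amap m F p - Polynomial.C p) (C c) := by
    intro c
    rw [Polynomial.IsRoot, Polynomial.eval_sub, Polynomial.eval_C, eval_Amap, hp c, sub_self]
  have hinf : {x | Polynomial.IsRoot (Amap m F p - Polynomial.C p) x}.Infinite := by
    apply Set.Infinite.mono (s := Set.range (C : F → MvPolynomial (Fin (m + 1)) F))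
    · rintro x ⟨c, rfl⟩; exact hroot c
    · exact Set.infinite_range_of_injective (C_injective _ F)
  have h0 : Amap m F p - Polynomial.C p = 0 := Polynomial.eq_zero_of_infinite_isRoot _ hinf
  have hA : Amap m F p = Polynomial.C p := by rwa [sub_eq_zero] at h0
  have : Ymap m F p = Polynomial.eval (-(C (((m + 1 : ℕ) : F)⁻¹) * ∑ j : Fin (m + 1), X j))
      (Amap m F p) := by
    rw [eval_Amap]
    have hyveq : yv m F
        = fun i => X i + -(C (((m + 1 : ℕ) : F)⁻¹) * ∑ j : Fin (m + 1), X j) := by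
      funext i
      rw [yv, sub_eq_add_neg]
    rw [Ymap, hyveq]
  rw [this, hA, Polynomial.eval_C]

/-- `z_i ↦ z_i + c` fixes each `qp` -/
lemma transInv_qp (k : ℕ) : TransInv (qp m F k) := by
  intro c
  have hyv : ∀ i : Fin (m + 1),
      aeval (fun i : Fin (m + 1) => X i + C c) (yv m F i) = yv m F i := by
    intro i
    rw [yv, map_sub, map_mul, map_sum]
    simp only [aeval_X, aeval_C, algebraMap_eq]
    rw [Finset.sum_add_distrib, Finset.sum_const, Finset.card_univ, Fintype.card_fin,
      mul_add, nsmul_eq_mul,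
      show ((m + 1 : ℕ) : MvPolynomial (Fin (m+1)) F) = C ((m + 1 : ℕ) : F)
        from (map_natCast _ _).symm,
      ← mul_assoc, ← map_mul, inv_mul_cancel₀ (natF_ne_zero m F), map_one, one_mul]
    ring
  rw [qp, map_sum]
  apply Finset.sum_congr rfl
  intro i _
  rw [map_pow, hyv]

def delta : MvPolynomial (Fin (m + 1)) F →ₐ[F] MvPolynomial (Fin (m + 1)) F :=
  aeval (fun k : Fin (m + 1) => if (k : ℕ) = 0 then 0 else X k)

lemma Ymap_comp_Tpol : (Ymap m F).comp (Tpol m F) = (Tpol m F).comp (delta m F) := by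
  apply MvPolynomial.algHom_ext
  intro k
  rw [AlgHom.comp_apply, AlgHom.comp_apply, delta, aeval_X]
  split_ifs with h
  · rw [map_zero, show Tpol m F (X k) = tv m F k from aeval_X _ _, tv, if_pos h,
      av, map_mul, Ymap_psum, qp_one, mul_zero]
  · rw [show Tpol m F (X k) = tv m F k from aeval_X _ _, tv, if_neg h, Ymap_qp]

def sig : MvPolynomial (Fin (m + 1)) F →ₐ[F] MvPolynomial (Fin m) F :=
  aeval (fun k : Fin (m + 1) =>
    if h : (k : ℕ) = 0 then 0 else X (⟨(k : ℕ) - 1, by omega⟩ : Fin m))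

lemma delta_eq : (delta m F)
    = (rename (Fin.succ : Fin m → Fin (m + 1))).comp (sig m F) := by
  apply MvPolynomial.algHom_ext
  intro k
  rw [AlgHom.comp_apply, delta, aeval_X, sig, aeval_X]
  split_ifs with h
  · rw [map_zero]
  · rw [rename_X]
    congr 1
    apply Fin.ext
    simp [Fin.val_succ]
    omega

end

theorem stmt_4 (F : Type*) [Field F] [CharZero F] (n : ℕ) (hn : 0 < n) :
    -- the algebra homomorphism `wₖ ↦ Σᵢ (zᵢ - z_avg)^k`, `2 ≤ k ≤ n`
    -- (the variable `wₖ`, `2 ≤ k ≤ n`, is indexed by `k - 2 : Fin (n - 1)`):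
    Function.Injective (⇑(aeval (R := F)
        (fun k : Fin (n - 1) => ∑ i : Fin n,
          (X i - C ((n : F)⁻¹) * ∑ j : Fin n, X j) ^ ((k : ℕ) + 2)) :
      MvPolynomial (Fin (n - 1)) F →ₐ[F] MvPolynomial (Fin n) F)) ∧
    Set.range (⇑(aeval (R := F)
        (fun k : Fin (n - 1) => ∑ i : Fin n,
          (X i - C ((n : F)⁻¹) * ∑ j : Fin n, X j) ^ ((k : ℕ) + 2)) :
      MvPolynomial (Fin (n - 1)) F →ₐ[F] MvPolynomial (Fin n) F)) =
      {p : MvPolynomial (Fin n) F | p.IsSymmetric ∧ TransInv p} := by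
  obtain ⟨m, rfl⟩ := Nat.exists_eq_succ_of_ne_zero hn.ne'
  have hmain : (aeval (R := F)
        (fun k : Fin (m + 1 - 1) => ∑ i : Fin (m + 1),
          (X i - C (((m + 1 : ℕ) : F)⁻¹) * ∑ j : Fin (m + 1), X j) ^ ((k : ℕ) + 2)) :
      MvPolynomial (Fin (m + 1 - 1)) F →ₐ[F] MvPolynomial (Fin (m + 1)) F)
      = (aeval (fun k : Fin m => qp m F ((k : ℕ) + 2)) :
        MvPolynomial (Fin m) F →ₐ[F] MvPolynomial (Fin (m + 1)) F) := rfl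
  rw [hmain]
  set Φ : MvPolynomial (Fin m) F →ₐ[F] MvPolynomial (Fin (m + 1)) F :=
    aeval (fun k : Fin m => qp m F ((k : ℕ) + 2)) with hΦ
  obtain ⟨hTinj, hTrange⟩ := Tpol_inj_range m F
  have hcomp : Φ = (Tpol m F).comp (rename (Fin.succ : Fin m → Fin (m + 1))) := by
    apply MvPolynomial.algHom_ext
    intro k
    rw [AlgHom.comp_apply, hΦ, aeval_X, rename_X,
      show Tpol m F (X k.succ) = tv m F k.succ from aeval_X _ _, tv, Fin.val_succ,
      if_neg (Nat.succ_ne_zero _)]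
  constructor
  · rw [hcomp]
    exact hTinj.comp (rename_injective _ (Fin.succ_injective m))
  · ext p
    constructor
    · rintro ⟨g, rfl⟩
      constructor
      · have hmem : Φ g ∈ (Tpol m F).range := by
          rw [hcomp]
          exact ⟨rename Fin.succ g, rfl⟩
        rw [hTrange] at hmem
        exact (mem_symmetricSubalgebra _).mp hmem
      · intro c
        have : (aeval (fun i : Fin (m + 1) => X i + C c)).comp Φ = Φ := by
          apply MvPolynomial.algHom_ext
          intro k
          rw [AlgHom.comp_apply, hΦ, aeval_X]
          exact transInv_qp m F _ c
        exact AlgHom.congr_fun this g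
    · rintro ⟨hsym, htr⟩
      obtain ⟨f, hf⟩ := (AlgHom.mem_range (Tpol m F)).mp
        (hTrange ▸ (mem_symmetricSubalgebra p).mpr hsym : p ∈ (Tpol m F).range)
      refine ⟨sig m F f, ?_⟩
      calc Φ (sig m F f) = Tpol m F (rename Fin.succ (sig m F f)) := by rw [hcomp]; rfl
        _ = Tpol m F (delta m F f) := by rw [delta_eq m F]; rfl
        _ = Ymap m F (Tpol m F f) := (AlgHom.congr_fun (Ymap_comp_Tpol m F) f).symm
        _ = p := by rw [hf]; exact Ymap_of_transInv m F htr
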